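/- Let p be a prime and S a finite p-group. If T is a subgroup of S with W(S) ≤ T ≤ S, then W(S) ≤ W(T). -/

import Mathlib

open scoped commutatorElement

/-- The set `𝕎(S)` of elementary abelian normal subgroups `A` of `S` such that for every
`s ∈ S`, if `⁅⁅a,s⁆,s⁆ = 1` for all `a ∈ A` then `⁅a,s⁆ = 1` for all `a ∈ A`. -/
def WSet (p : ℕ) (S : Type*) [Group S] : Set (Subgroup S) :=
  {A | A.Normal ∧ (∀ a ∈ A, ∀ b ∈ A, a * b = b * a) ∧ (∀ a ∈ A, a ^ p = 1) ∧
    ∀ s : S, (∀ a ∈ A, ⁅⁅a, s⁆, s⁆ = 1) → ∀ a ∈ A, ⁅a, s⁆ = 1}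

/-- `W(S)`, the subgroup of `S` generated by all members of `𝕎(S)`. -/
def Wsub (p : ℕ) (S : Type*) [Group S] : Subgroup S :=
  sSup (WSet p S)

/-- For a prime `p`, a finite `p`-group `S` and a subgroup `T` with `W(S) ≤ T ≤ S`, one has
`W(S) ≤ W(T)` (where `W(T)` is viewed inside `S` via the inclusion of `T`). -/
theorem Wsub_le_Wsub_of_le (p : ℕ) (hp : p.Prime) (S : Type*) [Group S] [Finite S]
    (hS : IsPGroup p S) (T : Subgroup S) (hT : Wsub p S ≤ T) :
    Wsub p S ≤ Subgroup.map T.subtype (Wsub p T) := by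
  apply sSup_le
  intro A hA
  obtain ⟨hnorm, hab, hexp, hW⟩ := id hA
  have hAT : A ≤ T := le_trans (le_sSup hA) hT
  -- The preimage of A in T is in WSet p T
  have hA' : A.subgroupOf T ∈ WSet p T := by
    refine ⟨?_, ?_, ?_, ?_⟩
    · exact Subgroup.Normal.subgroupOf hnorm T
    · intro a ha b hb
      ext
      exact hab a ha b hb
    · intro a ha
      ext
      push_cast
      exact hexp a ha
    · intro s hs a ha
      have := hW (s : S) ?_ (a : S) ha
      · ext
        push_cast
        simp only [commutatorElement_def] at this ⊢; exact_mod_cast this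
      · intro x hx
        have hxT : x ∈ T := hAT hx
        have := hs ⟨x, hxT⟩ hx
        have : ((⁅⁅(⟨x, hxT⟩ : T), s⁆, s⁆ : T) : S) = ((1 : T) : S) := by rw [this]
        simp only [commutatorElement_def] at this ⊢; push_cast at this ⊢; exact this
  intro x hx
  exact ⟨⟨x, hAT hx⟩, le_sSup hA' hx, rfl⟩
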